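/- Let m be a positive integer and let 1 ≤ i ≤ m and 1 ≤ j ≤ m. Then ∑_{k=i}^{m} ∑_{l=j}^{m} s(k,i) · s(l,j) · ∑_{p,q ⊢ m, |[p]|=k, |[q]|=l} N(p,q) / ([p]! · [q]!) equals 0 if i ≠ j, and equals s(m,i)/m! if i = j, where s(·,·) denotes the signed Stirling numbers of the first kind and the inner sum ranges over all pairs of integer partitions p, q of m with exactly k and l non-zero parts, respectively. -/

import Mathlib

open Finset

/-- Falling factorial of a real number: `x (x-1) ⋯ (x-n+1)`. -/
def fallFac (x : ℝ) (n : ℕ) : ℝ := ∏ i ∈ Finset.range n, (x - i)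

/-- `[p]!`: the product of the factorials of the multiplicities of the parts of `p`. -/
def multFact {m : ℕ} (p : Nat.Partition m) : ℕ :=
  ∏ i ∈ p.parts.toFinset, Nat.factorial (p.parts.count i)

/-- The parts of a partition, as a list, sorted in decreasing order. -/
def partsList {m : ℕ} (p : Nat.Partition m) : List ℕ := p.parts.sort (· ≥ ·)

/-- `N(p,q)`: the number of `|[p]| × |[q]|` binary matrices whose row sums are given
by `p` and whose column sums are given by `q`. -/
noncomputable def Nmat {m : ℕ} (p q : Nat.Partition m) : ℕ :=
  Nat.card {M : Matrix (Fin (Multiset.card p.parts)) (Fin (Multiset.card q.parts)) Bool //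
    (∀ i, (∑ j, if M i j then 1 else 0) = (partsList p).getD i 0) ∧
    (∀ j, (∑ i, if M i j then 1 else 0) = (partsList q).getD j 0)}

/-- The signed Stirling numbers of the first kind, defined via
`x^{\underline{n}} = ∑ i, s(n,i) xⁱ`, i.e. as coefficients of the falling factorial
polynomial. -/
noncomputable def stirlingFirst (n i : ℕ) : ℤ := (descPochhammer ℤ n).coeff i


section basic
variable {m : ℕ} (p : Nat.Partition m)

/-- the sorted parts function `Fin |p| → ℕ`. -/
def rho (i : Fin (Multiset.card p.parts)) : ℕ := (partsList p).getD i 0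

lemma partsList_length : (partsList p).length = Multiset.card p.parts :=
  Multiset.length_sort _

lemma partsList_coe : (partsList p : Multiset ℕ) = p.parts := Multiset.sort_eq _ _

lemma rho_def (i : Fin (Multiset.card p.parts)) :
    rho p i = (partsList p).get ⟨i, by rw [partsList_length]; exact i.2⟩ := by
  simp [rho, List.getD_eq_getElem?_getD, List.getElem?_eq_getElem
    (by rw [partsList_length]; exact i.2)]

lemma map_rho_univ : Multiset.map (rho p) Finset.univ.val = p.parts := by
  have key : List.map (rho p) (List.finRange (Multiset.card p.parts)) = partsList p := by
    apply List.ext_getElem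
    · simp [partsList_length]
    · intro n h1 h2
      simp only [List.getElem_map, List.getElem_finRange]
      have key2 : ∀ (i : Fin (Multiset.card p.parts)), (i : ℕ) = n →
          rho p i = (partsList p)[n]'h2 := by
        intro i hi
        simp [rho, hi, List.getD_eq_getElem?_getD, List.getElem?_eq_getElem h2]
      exact key2 _ (by simp)
  calc Multiset.map (rho p) Finset.univ.val
      = ↑(List.map (rho p) (List.finRange (Multiset.card p.parts))) := rfl
    _ = ↑(partsList p) := by rw [key]
    _ = p.parts := partsList_coe p

lemma rho_mem (i : Fin (Multiset.card p.parts)) : rho p i ∈ p.parts := by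
  rw [← map_rho_univ p]
  exact Multiset.mem_map_of_mem _ (by simp)

lemma rho_pos (i : Fin (Multiset.card p.parts)) : 0 < rho p i :=
  p.parts_pos (rho_mem p i)

end basic

section emb
variable {α β : Type*} [Fintype α] [Fintype β]

private lemma F_congr {f : α → ℕ} {g : β → ℕ} {s : Finset ℕ}
    (F : ∀ v : s, ({a // f a = (v : ℕ)} ↪ {b // g b = (v : ℕ)})) :
    ∀ (v v' : s), v = v' → ∀ (x : {t // f t = (v : ℕ)}) (x' : {t // f t = (v' : ℕ)}),
      (x : α) = (x' : α) → ((F v x : {b // g b = (v : ℕ)}) : β) = ((F v' x') : β) := by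
  rintro v _ rfl x x' hxx
  rw [Subtype.ext hxx]

def embLevelEquiv (f : α → ℕ) (g : β → ℕ) (s : Finset ℕ) (hs : ∀ a, f a ∈ s) :
    {e : α ↪ β // g ∘ e = f} ≃ ∀ v : s, ({a // f a = (v : ℕ)} ↪ {b // g b = (v : ℕ)}) where
  toFun e v := ⟨fun a => ⟨e.1 a.1, by rw [show g (e.1 a.1) = f a.1 from congrFun e.2 a.1, a.2]⟩,
    fun a a' h => Subtype.ext (e.1.injective (congrArg Subtype.val h))⟩
  invFun F := ⟨⟨fun a => (F ⟨f a, hs a⟩ ⟨a, rfl⟩ : β), by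
      intro a a' h
      dsimp only at h
      have h1 : g (F ⟨f a, hs a⟩ ⟨a, rfl⟩ : β) = f a := (F ⟨f a, hs a⟩ ⟨a, rfl⟩).2
      have h2 : g (F ⟨f a', hs a'⟩ ⟨a', rfl⟩ : β) = f a' := (F ⟨f a', hs a'⟩ ⟨a', rfl⟩).2
      have hv : f a = f a' := by rw [← h1, ← h2, h]
      have haux := F_congr F ⟨f a, hs a⟩ ⟨f a', hs a'⟩ (Subtype.ext hv)
        ⟨a', hv.symm⟩ ⟨a', rfl⟩ rfl
      rw [← haux] at h
      exact congrArg Subtype.val ((F ⟨f a, hs a⟩).injective (Subtype.ext h))⟩,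
    funext fun a => (F ⟨f a, hs a⟩ ⟨a, rfl⟩).2⟩
  left_inv e := Subtype.ext (DFunLike.ext _ _ fun a => rfl)
  right_inv F := by
    funext v
    apply DFunLike.ext
    intro x
    apply Subtype.ext
    exact F_congr F ⟨f x.1, hs x.1⟩ v (Subtype.ext x.2) ⟨x.1, rfl⟩ x rfl

lemma card_emb_level (f : α → ℕ) (g : β → ℕ) (s : Finset ℕ) (hs : ∀ a, f a ∈ s) :
    Nat.card {e : α ↪ β // g ∘ e = f} =
      ∏ v ∈ s, (Fintype.card {b // g b = v}).descFactorial (Fintype.card {a // f a = v}) := by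
  classical
  rw [Nat.card_congr (embLevelEquiv f g s hs), Nat.card_pi, ← Finset.prod_coe_sort s]
  apply Finset.prod_congr rfl
  intro v _
  rw [Nat.card_eq_fintype_card, Fintype.card_embedding_eq]

end emb

section count
variable {β : Type*} [Fintype β]

lemma card_level (h : β → ℕ) (v : ℕ) :
    Fintype.card {a // h a = v} = Multiset.count v (Multiset.map h Finset.univ.val) := by
  classical
  rw [Fintype.card_subtype, Multiset.count_map, Finset.card, Finset.filter_val]
  congr 1
  apply Multiset.filter_congr
  intro a _
  exact ⟨fun h' => h'.symm, fun h' => h'.symm⟩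

lemma card_supp (r : β → ℕ) :
    Fintype.card {a // r a ≠ 0} =
      Multiset.card (Multiset.filter (· ≠ 0) (Multiset.map r Finset.univ.val)) := by
  classical
  rw [Fintype.card_subtype, Finset.card, Finset.filter_val, Multiset.filter_map,
    Multiset.card_map]
  rfl

variable {m : ℕ} (p : Nat.Partition m)

lemma count_emb (r : β → ℕ)
    (hr : Multiset.filter (· ≠ 0) (Multiset.map r Finset.univ.val) = p.parts) :
    Nat.card {e : Fin (Multiset.card p.parts) ↪ β // r ∘ e = rho p} = multFact p := by
  classical
  rw [card_emb_level (rho p) r p.parts.toFinset (fun i => Multiset.mem_toFinset.2 (rho_mem p i))]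
  apply Finset.prod_congr rfl
  intro v hv
  have hvne : v ≠ 0 := fun h0 =>
    Nat.lt_irrefl 0 (h0 ▸ p.parts_pos (Multiset.mem_toFinset.1 hv))
  have hcard1 : Fintype.card {i // rho p i = v} = Multiset.count v p.parts := by
    rw [card_level, map_rho_univ]
  have hcard2 : Fintype.card {b // r b = v} = Multiset.count v p.parts := by
    rw [card_level, ← hr, Multiset.count_filter, if_pos hvne]
  rw [hcard1, hcard2, Nat.descFactorial_self]

lemma card_supp_eq (r : β → ℕ)
    (hr : Multiset.filter (· ≠ 0) (Multiset.map r Finset.univ.val) = p.parts) :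
    Fintype.card {a // r a ≠ 0} = Multiset.card p.parts := by
  rw [card_supp, hr]

lemma exists_emb (r : β → ℕ)
    (hr : Multiset.filter (· ≠ 0) (Multiset.map r Finset.univ.val) = p.parts) :
    ∃ e : Fin (Multiset.card p.parts) ↪ β, r ∘ e = rho p := by
  have h := count_emb p r hr
  have hpos : 0 < multFact p := by unfold multFact; exact Finset.prod_pos fun i _ => Nat.factorial_pos _
  rw [← h] at hpos
  obtain ⟨e⟩ := (Nat.card_pos_iff.1 hpos).1
  exact ⟨e.1, e.2⟩

end count

section RTsec
variable {m x : ℕ} (p : Nat.Partition m)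

/-- functions `Fin x → ℕ` whose nonzero values form the partition `p`. -/
def RT (x : ℕ) {m : ℕ} (p : Nat.Partition m) : Type :=
  {r : Fin x → ℕ // Multiset.filter (· ≠ 0) (Multiset.map r Finset.univ.val) = p.parts}

lemma RT_bound (r : RT x p) (a : Fin x) : r.1 a < m + 1 := by
  obtain ⟨rf, hrf⟩ := r
  dsimp only
  rcases Nat.eq_zero_or_pos (rf a) with h | h
  · omega
  · have hmem : rf a ∈ p.parts := by
      rw [← hrf]
      exact Multiset.mem_filter.2 ⟨Multiset.mem_map_of_mem _ (by simp), h.ne'⟩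
    have hle : rf a ≤ m := by
      have := Multiset.single_le_sum (fun y (_ : y ∈ p.parts) => Nat.zero_le y) _ hmem
      rwa [p.parts_sum] at this
    omega

instance : Finite (RT x p) :=
  Finite.of_injective (fun r => fun a : Fin x => (⟨r.1 a, RT_bound p r a⟩ : Fin (m+1)))
    (by
      intro r r' h
      apply Subtype.ext; funext a
      exact congrArg Fin.val (congrFun h a))

noncomputable instance : Fintype (RT x p) := Fintype.ofFinite _

lemma count_zero_parts : Multiset.count 0 p.parts = 0 :=
  Multiset.count_eq_zero.2 fun hmem => (p.parts_pos hmem).ne' rfl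

lemma RC : Nat.card (RT x p) * multFact p =
    x.descFactorial (Multiset.card p.parts) := by
  classical
  set k := Multiset.card p.parts with hk
  have pf1 : ∀ g : Fin k ↪ Fin x,
      Multiset.filter (· ≠ 0)
        (Multiset.map (Function.extend g (rho p) (fun _ => 0)) Finset.univ.val) = p.parts := by
    intro g
    apply Multiset.ext.mpr
    intro v
    rw [Multiset.count_filter]
    by_cases hv : v ≠ 0
    · rw [if_pos hv]
      have hbij : Function.Bijective (fun i : {i // rho p i = v} =>
          (⟨g i.1, by rw [g.injective.extend_apply]; exact i.2⟩ :
            {a // Function.extend g (rho p) (fun _ => 0) a = v})) := by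
        constructor
        · intro i i' hii
          exact Subtype.ext (g.injective (congrArg Subtype.val hii))
        · rintro ⟨a, ha⟩
          by_cases hrange : ∃ i, g i = a
          · obtain ⟨i, rfl⟩ := hrange
            rw [g.injective.extend_apply] at ha
            exact ⟨⟨i, ha⟩, Subtype.ext rfl⟩
          · rw [Function.extend_apply' _ _ _ hrange] at ha
            exact absurd ha.symm hv
      calc Multiset.count v (Multiset.map (Function.extend g (rho p) fun _ => 0) Finset.univ.val)
          = Fintype.card {a // Function.extend g (rho p) (fun _ => 0) a = v} :=
            (card_level _ v).symm
        _ = Fintype.card {i // rho p i = v} :=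
            (Fintype.card_congr (Equiv.ofBijective _ hbij)).symm
        _ = Multiset.count v p.parts := by rw [card_level, map_rho_univ]
    · push_neg at hv
      subst hv
      rw [if_neg (by simp), count_zero_parts]
  let Ψ : (Fin k ↪ Fin x) → RT x p := fun g => ⟨Function.extend g (rho p) (fun _ => 0), pf1 g⟩
  have pf2 : ∀ (r : RT x p) (g : Fin k ↪ Fin x), Ψ g = r ↔ r.1 ∘ g = rho p := by
    intro r g
    rw [show Ψ g = r ↔ (Ψ g).1 = r.1 from ⟨fun h => h ▸ rfl, fun h => Subtype.ext h⟩]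
    constructor
    · intro h
      funext i
      have := congrFun h (g i)
      simp only [Ψ] at this
      rw [g.injective.extend_apply] at this
      rw [Function.comp_apply, this]
    · intro h
      funext a
      show Function.extend g (rho p) (fun _ => 0) a = r.1 a
      by_cases hrange : ∃ i, g i = a
      · obtain ⟨i, rfl⟩ := hrange
        rw [g.injective.extend_apply]
        exact (congrFun h i).symm
      · rw [Function.extend_apply' _ _ _ hrange]
        by_contra hne
        have hne' : r.1 a ≠ 0 := fun h0 => hne h0.symm
        have hcard : Fintype.card {b // r.1 b ≠ 0} = k := card_supp_eq p r.1 r.2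
        have hbij : Function.Bijective (fun i : Fin k =>
            (⟨g i, by
              rw [show r.1 (g i) = rho p i from congrFun h i]
              exact (rho_pos p i).ne'⟩ : {b // r.1 b ≠ 0})) := by
          rw [Fintype.bijective_iff_injective_and_card]
          exact ⟨fun i i' hii => g.injective (congrArg Subtype.val hii),
            by rw [hcard, Fintype.card_fin]⟩
        obtain ⟨i, hi⟩ := hbij.2 ⟨a, hne'⟩
        exact hrange ⟨i, congrArg Subtype.val hi⟩
  have e1 : Nat.card (Fin k ↪ Fin x) = x.descFactorial k := by
    rw [Nat.card_eq_fintype_card, Fintype.card_embedding_eq, Fintype.card_fin, Fintype.card_fin]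
  have e2 : Nat.card (Fin k ↪ Fin x) = ∑ r : RT x p, Nat.card {g // Ψ g = r} := by
    rw [← Nat.card_congr (Equiv.sigmaFiberEquiv Ψ), Nat.card_eq_fintype_card,
      Fintype.card_sigma]
    apply Finset.sum_congr rfl
    intro r _
    rw [Nat.card_eq_fintype_card]
  have e3 : ∀ r : RT x p, Nat.card {g // Ψ g = r} = multFact p := by
    intro r
    rw [Nat.card_congr (Equiv.subtypeEquivRight (pf2 r)), count_emb p r.1 r.2]
  rw [← e1, e2, Finset.sum_congr rfl fun r _ => e3 r, Finset.sum_const, smul_eq_mul,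
    Finset.card_univ, ← Nat.card_eq_fintype_card]

end RTsec

section A3

lemma entry_false {x y : ℕ} (M : Fin x → Fin y → Bool) (a : Fin x)
    (h : (∑ b, if M a b then 1 else 0) = 0) (b : Fin y) : M a b = false := by
  by_contra hb
  have h2 := (Finset.sum_eq_zero_iff.mp h) b (Finset.mem_univ b)
  simp only [Bool.not_eq_false] at hb
  rw [hb] at h2
  simp at h2

lemma helper1 {y l : ℕ} (c : Fin y → ℕ) (fF : Fin l ≃ {b // c b ≠ 0})
    (P : Fin y → Bool) (hzero : ∀ b, c b = 0 → P b = false) :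
    (∑ b, if P b then 1 else 0) = ∑ j : Fin l, (if P (fF j).1 then (1:ℕ) else 0) := by
  classical
  have h1 : (∑ b ∈ Finset.univ.filter (fun b => c b ≠ 0), if P b then (1:ℕ) else 0)
      = ∑ b, if P b then (1:ℕ) else 0 := by
    apply Finset.sum_filter_of_ne
    intro b _ hfb
    intro hcb
    rw [hzero b hcb] at hfb
    simp at hfb
  rw [← h1, Finset.sum_subtype (p := fun b => c b ≠ 0) (Finset.univ.filter (fun b => c b ≠ 0))
    (fun b => by simp) (fun b => if P b then (1:ℕ) else 0)]
  exact (Equiv.sum_comp fF (fun s : {b // c b ≠ 0} => if P s.1 then (1:ℕ) else 0)).symm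

lemma exists_equiv_supp {m x : ℕ} (p : Nat.Partition m) (r : Fin x → ℕ)
    (hr : Multiset.filter (· ≠ 0) (Multiset.map r Finset.univ.val) = p.parts) :
    ∃ eE : Fin (Multiset.card p.parts) ≃ {a // r a ≠ 0}, ∀ i, r (eE i).1 = rho p i := by
  classical
  obtain ⟨e, he⟩ := exists_emb p r hr
  have hmap : ∀ i, r (e i) ≠ 0 := fun i => by
    rw [show r (e i) = rho p i from congrFun he i]
    exact (rho_pos p i).ne'
  have hbij : Function.Bijective (fun i => (⟨e i, hmap i⟩ : {a // r a ≠ 0})) := by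
    rw [Fintype.bijective_iff_injective_and_card]
    refine ⟨fun i i' hii => e.injective (congrArg Subtype.val hii), ?_⟩
    rw [card_supp_eq p r hr, Fintype.card_fin]
  exact ⟨Equiv.ofBijective _ hbij, fun i => congrFun he i⟩

lemma card_fiber {m x y : ℕ} (p q : Nat.Partition m) (r : Fin x → ℕ) (c : Fin y → ℕ)
    (hr : Multiset.filter (· ≠ 0) (Multiset.map r Finset.univ.val) = p.parts)
    (hc : Multiset.filter (· ≠ 0) (Multiset.map c Finset.univ.val) = q.parts) :
    Nat.card {M : Fin x → Fin y → Bool //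
        (∀ a, (∑ b, if M a b then 1 else 0) = r a) ∧
        (∀ b, (∑ a, if M a b then 1 else 0) = c b)} = Nmat p q := by
  classical
  obtain ⟨eE, heE⟩ := exists_equiv_supp p r hr
  obtain ⟨fF, hfF⟩ := exists_equiv_supp q c hc
  apply Nat.card_congr
  refine Equiv.mk
    (fun M => ⟨Matrix.of (fun i j => M.1 (eE i).1 (fF j).1), ?_, ?_⟩)
    (fun M' => ⟨fun a b => if h : r a ≠ 0 then (if h' : c b ≠ 0 then
        M'.1 (eE.symm ⟨a, h⟩) (fF.symm ⟨b, h'⟩) else false) else false, ?_, ?_⟩)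
    ?_ ?_
  · -- row sums of the small matrix
    intro i
    have hz : ∀ b, c b = 0 → M.1 (eE i).1 b = false := by
      intro b hb
      apply entry_false (fun b a => M.1 a b) b
      rw [M.2.2 b, hb]
    rw [show (∑ j, if Matrix.of (fun i j => M.1 (eE i).1 (fF j).1) i j then (1:ℕ) else 0)
        = ∑ j, if M.1 (eE i).1 (fF j).1 then (1:ℕ) else 0 from rfl,
      ← helper1 c fF _ hz, M.2.1]
    exact heE i
  · -- column sums of the small matrix
    intro j
    have hz : ∀ a, r a = 0 → M.1 a (fF j).1 = false := by
      intro a ha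
      apply entry_false M.1 a
      rw [M.2.1 a, ha]
    rw [show (∑ i, if Matrix.of (fun i j => M.1 (eE i).1 (fF j).1) i j then (1:ℕ) else 0)
        = ∑ i, if M.1 (eE i).1 (fF j).1 then (1:ℕ) else 0 from rfl,
      ← helper1 r eE _ hz, M.2.2]
    exact hfF j
  · -- row sums of the big matrix
    intro a
    by_cases ha : r a ≠ 0
    · have hz : ∀ b, c b = 0 → (if h : r a ≠ 0 then (if h' : c b ≠ 0 then
          M'.1 (eE.symm ⟨a, h⟩) (fF.symm ⟨b, h'⟩) else false) else false) = false := by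
        intro b hb
        rw [dif_pos ha, dif_neg (by simp [hb])]
      rw [helper1 c fF _ hz]
      have hterm : ∀ j : Fin (Multiset.card q.parts), (if (if h : r a ≠ 0 then (if h' : c (fF j).1 ≠ 0 then
          M'.1 (eE.symm ⟨a, h⟩) (fF.symm ⟨(fF j).1, h'⟩) else false) else false)
          then (1:ℕ) else 0) = if M'.1 (eE.symm ⟨a, ha⟩) j then 1 else 0 := by
        intro j
        rw [dif_pos ha, dif_pos (fF j).2]
        congr 2
        rw [Subtype.coe_eta, Equiv.symm_apply_apply]
      rw [Finset.sum_congr rfl (fun j _ => hterm j), M'.2.1]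
      have hx := heE (eE.symm ⟨a, ha⟩)
      rw [Equiv.apply_symm_apply] at hx
      exact hx.symm
    · push_neg at ha
      rw [ha]
      apply Finset.sum_eq_zero
      intro b _
      simp [ha]
  · -- column sums of the big matrix
    intro b
    by_cases hb : c b ≠ 0
    · have hz : ∀ a, r a = 0 → (if h : r a ≠ 0 then (if h' : c b ≠ 0 then
          M'.1 (eE.symm ⟨a, h⟩) (fF.symm ⟨b, h'⟩) else false) else false) = false := by
        intro a ha
        rw [dif_neg (by simp [ha])]
      rw [helper1 r eE _ hz]
      have hterm : ∀ i : Fin (Multiset.card p.parts),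
          (if (if h : r (eE i).1 ≠ 0 then (if h' : c b ≠ 0 then
          M'.1 (eE.symm ⟨(eE i).1, h⟩) (fF.symm ⟨b, h'⟩) else false) else false)
          then (1:ℕ) else 0) = if M'.1 i (fF.symm ⟨b, hb⟩) then 1 else 0 := by
        intro i
        rw [dif_pos (by rw [heE i]; exact (rho_pos p i).ne'), dif_pos hb]
        congr 2
        rw [Subtype.coe_eta, Equiv.symm_apply_apply]
      rw [Finset.sum_congr rfl (fun i _ => hterm i), M'.2.2]
      have hx := hfF (fF.symm ⟨b, hb⟩)
      rw [Equiv.apply_symm_apply] at hx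
      exact hx.symm
    · push_neg at hb
      rw [hb]
      apply Finset.sum_eq_zero
      intro a _
      simp [hb]
  · -- left inverse
    intro M
    apply Subtype.ext
    funext a b
    show (if h : r a ≠ 0 then (if h' : c b ≠ 0 then
        Matrix.of (fun i j => M.1 (eE i).1 (fF j).1) (eE.symm ⟨a, h⟩) (fF.symm ⟨b, h'⟩)
        else false) else false) = M.1 a b
    by_cases ha : r a ≠ 0
    · by_cases hb : c b ≠ 0
      · rw [dif_pos ha, dif_pos hb]
        show M.1 (eE (eE.symm ⟨a, ha⟩)).1 (fF (fF.symm ⟨b, hb⟩)).1 = M.1 a b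
        rw [Equiv.apply_symm_apply, Equiv.apply_symm_apply]
      · push_neg at hb
        rw [dif_pos ha, dif_neg (by simp [hb])]
        symm
        apply entry_false (fun b a => M.1 a b) b
        rw [M.2.2 b, hb]
    · push_neg at ha
      rw [dif_neg (by simp [ha])]
      symm
      apply entry_false M.1 a
      rw [M.2.1 a, ha]
  · -- right inverse
    intro M'
    apply Subtype.ext
    funext i j
    show (if h : r (eE i).1 ≠ 0 then (if h' : c (fF j).1 ≠ 0 then
        M'.1 (eE.symm ⟨(eE i).1, h⟩) (fF.symm ⟨(fF j).1, h'⟩) else false) else false) = M'.1 i j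
    rw [dif_pos (by rw [heE i]; exact (rho_pos p i).ne'), dif_pos (fF j).2]
    rw [Subtype.coe_eta, Subtype.coe_eta, Equiv.symm_apply_apply, Equiv.symm_apply_apply]

end A3

section master
variable {x y m : ℕ}

def rsum (M : Fin x → Fin y → Bool) (a : Fin x) : ℕ := ∑ b, if M a b then 1 else 0
def csum (M : Fin x → Fin y → Bool) (b : Fin y) : ℕ := ∑ a, if M a b then 1 else 0

lemma sum_filter_vals {n : ℕ} (r : Fin n → ℕ) :
    (Multiset.filter (· ≠ 0) (Multiset.map r Finset.univ.val)).sum = ∑ a, r a := by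
  classical
  have hsplit := Multiset.filter_add_not (· ≠ 0) (Multiset.map r Finset.univ.val)
  have h0 : (Multiset.filter (fun v => ¬ v ≠ 0) (Multiset.map r Finset.univ.val)).sum = 0 :=
    Multiset.sum_eq_zero (fun v hv => not_not.mp (Multiset.mem_filter.1 hv).2)
  have := congrArg Multiset.sum hsplit
  rw [Multiset.sum_add, h0, add_zero] at this
  rw [this]
  rfl

/-- the row partition of a matrix with total sum `m`. -/
def rowPart (r : Fin x → ℕ) (h : ∑ a, r a = m) : Nat.Partition m where
  parts := Multiset.filter (· ≠ 0) (Multiset.map r Finset.univ.val)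
  parts_pos := fun hi => Nat.pos_of_ne_zero (Multiset.mem_filter.1 hi).2
  parts_sum := by rw [sum_filter_vals]; exact h

def BigT (x y m : ℕ) : Type :=
  {M : Fin x → Fin y → Bool // (∑ a, ∑ b, if M a b then 1 else 0) = m}

lemma rsum_total (M : BigT x y m) : ∑ a, rsum M.1 a = m := M.2

lemma csum_total (M : BigT x y m) : ∑ b, csum M.1 b = m :=
  Finset.sum_comm.trans M.2

def masterEquiv (x y m : ℕ) : BigT x y m ≃
    Σ pq : Nat.Partition m × Nat.Partition m, Σ _rc : RT x pq.1 × RT y pq.2,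
      {M : Fin x → Fin y → Bool //
        (∀ a, (∑ b, if M a b then 1 else 0) = _rc.1.1 a) ∧
        (∀ b, (∑ a, if M a b then 1 else 0) = _rc.2.1 b)} where
  toFun M := ⟨(rowPart (rsum M.1) (rsum_total M), rowPart (csum M.1) (csum_total M)),
    ⟨⟨rsum M.1, rfl⟩, ⟨csum M.1, rfl⟩⟩, ⟨M.1, fun a => rfl, fun b => rfl⟩⟩
  invFun := fun ⟨pq, rc, M⟩ => ⟨M.1, by
    have h1 : ∀ a, rsum M.1 a = rc.1.1 a := M.2.1
    calc (∑ a, ∑ b, if M.1 a b then 1 else 0) = ∑ a, rc.1.1 a :=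
          Finset.sum_congr rfl (fun a _ => h1 a)
      _ = (Multiset.filter (· ≠ 0) (Multiset.map rc.1.1 Finset.univ.val)).sum :=
          (sum_filter_vals _).symm
      _ = pq.1.parts.sum := by rw [rc.1.2]
      _ = m := pq.1.parts_sum⟩
  left_inv M := rfl
  right_inv := by
    rintro ⟨⟨p, q⟩, ⟨⟨r, hr⟩, ⟨c, hc⟩⟩, ⟨M, hM1, hM2⟩⟩
    have hrs : rsum M = r := funext hM1
    have hcs : csum M = c := funext hM2
    subst hrs hcs
    have htotr : ∑ a, rsum M a = m := by
      rw [← sum_filter_vals (rsum M), hr]; exact p.parts_sum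
    have htotc : ∑ b', csum M b' = m := by
      rw [← sum_filter_vals (csum M), hc]; exact q.parts_sum
    obtain rfl : p = rowPart (rsum M) htotr := (Nat.Partition.ext hr.symm : p = _)
    obtain rfl : q = rowPart (csum M) htotc := (Nat.Partition.ext hc.symm : q = _)
    rfl

end master

section countall

lemma card_BigT (x y m : ℕ) : Nat.card (BigT x y m) = (x * y).choose m := by
  classical
  have e : BigT x y m ≃ {s : Finset (Fin x × Fin y) // s.card = m} := {
    toFun := fun M => ⟨Finset.univ.filter (fun ab => M.1 ab.1 ab.2), by
      rw [Finset.card_filter]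
      rw [show (∑ ab : Fin x × Fin y, if M.1 ab.1 ab.2 then 1 else 0)
        = ∑ a, ∑ b, if M.1 a b then 1 else 0 from Fintype.sum_prod_type _]
      exact M.2⟩
    invFun := fun s => ⟨fun a b => decide ((a, b) ∈ s.1), by
      obtain ⟨sv, hsv⟩ := s
      dsimp only
      rw [show (∑ a, ∑ b, if decide ((a, b) ∈ sv) then 1 else 0)
        = ∑ ab : Fin x × Fin y, if decide ((ab.1, ab.2) ∈ sv) then 1 else 0
        from (Fintype.sum_prod_type (fun ab : Fin x × Fin y =>
          if decide ((ab.1, ab.2) ∈ sv) then (1:ℕ) else 0)).symm, ← hsv, ← Finset.card_filter]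
      congr 1
      ext ab
      simp⟩
    left_inv := fun M => by
      apply Subtype.ext
      funext a b
      show decide ((a, b) ∈ Finset.univ.filter (fun ab => M.1 ab.1 ab.2)) = M.1 a b
      by_cases h : M.1 a b = true
      · simp [h]
      · simp only [Bool.not_eq_true] at h
        simp [h]
    right_inv := fun s => by
      apply Subtype.ext
      show Finset.univ.filter _ = s.1
      ext ab
      simp }
  rw [Nat.card_congr e, Nat.card_eq_fintype_card, Fintype.card_finset_len,
    Fintype.card_prod, Fintype.card_fin, Fintype.card_fin]

lemma multFact_pos {m : ℕ} (p : Nat.Partition m) : 0 < multFact p := by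
  unfold multFact; exact Finset.prod_pos fun _ _ => Nat.factorial_pos _

lemma count_identity (m x y : ℕ) :
    (((x * y).choose m : ℕ) : ℝ) = ∑ p : Nat.Partition m, ∑ q : Nat.Partition m,
      (Nmat p q : ℝ) * ((x.descFactorial (Multiset.card p.parts) : ℝ) / multFact p) *
        ((y.descFactorial (Multiset.card q.parts) : ℝ) / multFact q) := by
  classical
  have h1 : Nat.card (BigT x y m) = ∑ p : Nat.Partition m, ∑ q : Nat.Partition m,
      (Nat.card (RT x p)) * ((Nat.card (RT y q)) * Nmat p q) := by
    rw [Nat.card_congr (masterEquiv x y m), Nat.card_eq_fintype_card, Fintype.card_sigma,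
      Fintype.sum_prod_type]
    apply Finset.sum_congr rfl; intro p _
    apply Finset.sum_congr rfl; intro q _
    rw [Fintype.card_sigma, Fintype.sum_prod_type]
    have hconst : ∀ (r : RT x p) (c : RT y q),
        Fintype.card {M : Fin x → Fin y → Bool //
          (∀ a, (∑ b, if M a b then 1 else 0) = r.1 a) ∧
          (∀ b, (∑ a, if M a b then 1 else 0) = c.1 b)} = Nmat p q := fun r c => by
      rw [← Nat.card_eq_fintype_card]
      exact card_fiber p q r.1 c.1 r.2 c.2
    rw [Finset.sum_congr rfl (fun r (_ : r ∈ Finset.univ) =>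
      Finset.sum_congr rfl (fun c (_ : c ∈ Finset.univ) => hconst r c))]
    simp [Finset.sum_const, Finset.card_univ, Nat.card_eq_fintype_card, mul_assoc]
  have h2 := card_BigT x y m
  have h3 : ((x * y).choose m : ℝ) = ∑ p : Nat.Partition m, ∑ q : Nat.Partition m,
      ((Nat.card (RT x p) : ℝ) * ((Nat.card (RT y q) : ℝ) * (Nmat p q : ℝ))) := by
    rw [← h2, h1]
    push_cast
    rfl
  rw [h3]
  apply Finset.sum_congr rfl; intro p _
  apply Finset.sum_congr rfl; intro q _
  have hp : (Nat.card (RT x p) : ℝ) = (x.descFactorial (Multiset.card p.parts) : ℝ) / multFact p := by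
    rw [eq_div_iff (by exact_mod_cast (multFact_pos p).ne')]
    exact_mod_cast congrArg (Nat.cast : ℕ → ℝ) (RC p)
  have hq : (Nat.card (RT y q) : ℝ) = (y.descFactorial (Multiset.card q.parts) : ℝ) / multFact q := by
    rw [eq_div_iff (by exact_mod_cast (multFact_pos q).ne')]
    exact_mod_cast congrArg (Nat.cast : ℕ → ℝ) (RC q)
  rw [hp, hq]
  ring

end countall

section poly
open Polynomial

noncomputable def PL (m : ℕ) : Polynomial (Polynomial ℝ) :=
  ∑ r ∈ Finset.range (m+1),
    Polynomial.C (Polynomial.C (((stirlingFirst m r : ℤ) : ℝ) / m.factorial) *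
      Polynomial.X ^ r) * Polynomial.X ^ r

noncomputable def PR (m : ℕ) : Polynomial (Polynomial ℝ) :=
  ∑ p : Nat.Partition m, ∑ q : Nat.Partition m,
    Polynomial.C (Polynomial.C ((Nmat p q : ℝ) / (multFact p * multFact q)) *
      descPochhammer ℝ (Multiset.card q.parts)) *
      (descPochhammer ℝ (Multiset.card p.parts)).map Polynomial.C

lemma coeff_desc (n r : ℕ) : (descPochhammer ℝ n).coeff r = ((stirlingFirst n r : ℤ) : ℝ) := by
  rw [← descPochhammer_map (Int.castRingHom ℝ) n, coeff_map]
  rfl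

lemma evalPL (m x y : ℕ) :
    Polynomial.eval (y : ℝ) (Polynomial.eval (Polynomial.C (x : ℝ)) (PL m)) =
      ((x * y).choose m : ℝ) := by
  rw [PL, Polynomial.eval_finset_sum]
  have hterm : ∀ r ∈ Finset.range (m+1),
      Polynomial.eval (Polynomial.C (x : ℝ))
        (Polynomial.C (Polynomial.C (((stirlingFirst m r : ℤ) : ℝ) / m.factorial) *
          Polynomial.X ^ r) * Polynomial.X ^ r)
      = Polynomial.C (((stirlingFirst m r : ℤ) : ℝ) / m.factorial) *
          Polynomial.X ^ r * Polynomial.C ((x : ℝ) ^ r) := by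
    intro r _
    rw [Polynomial.eval_mul, Polynomial.eval_C, Polynomial.eval_pow, Polynomial.eval_X,
      ← Polynomial.C_pow]
  rw [Finset.sum_congr rfl hterm, Polynomial.eval_finset_sum]
  have hterm2 : ∀ r ∈ Finset.range (m+1),
      Polynomial.eval (y : ℝ) (Polynomial.C (((stirlingFirst m r : ℤ) : ℝ) / m.factorial) *
          Polynomial.X ^ r * Polynomial.C ((x : ℝ) ^ r))
      = (1 / m.factorial) * ((descPochhammer ℝ m).coeff r * ((x : ℝ) * y) ^ r) := by
    intro r _
    rw [Polynomial.eval_mul, Polynomial.eval_mul, Polynomial.eval_C, Polynomial.eval_C,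
      Polynomial.eval_pow, Polynomial.eval_X, coeff_desc]
    ring
  rw [Finset.sum_congr rfl hterm2, ← Finset.mul_sum]
  rw [← Polynomial.eval_eq_sum_range' (lt_of_le_of_lt (le_of_eq (descPochhammer_natDegree ℝ m))
    (Nat.lt_succ_self m)) ((x : ℝ) * y)]
  rw [show ((x : ℝ) * y) = (((x * y : ℕ) : ℝ)) by push_cast; ring]
  rw [descPochhammer_eval_eq_descFactorial ℝ (x * y) m,
    Nat.descFactorial_eq_factorial_mul_choose]
  have : (m.factorial : ℝ) ≠ 0 := Nat.cast_ne_zero.2 (Nat.factorial_pos m).ne'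
  push_cast
  field_simp

lemma evalPR (m x y : ℕ) :
    Polynomial.eval (y : ℝ) (Polynomial.eval (Polynomial.C (x : ℝ)) (PR m)) =
      ∑ p : Nat.Partition m, ∑ q : Nat.Partition m,
        (Nmat p q : ℝ) * ((x.descFactorial (Multiset.card p.parts) : ℝ) / multFact p) *
          ((y.descFactorial (Multiset.card q.parts) : ℝ) / multFact q) := by
  rw [PR, Polynomial.eval_finset_sum]
  rw [Finset.sum_congr rfl (fun p _ => Polynomial.eval_finset_sum _ _ _)]
  rw [Polynomial.eval_finset_sum]
  apply Finset.sum_congr rfl; intro p _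
  rw [Polynomial.eval_finset_sum]
  apply Finset.sum_congr rfl; intro q _
  rw [Polynomial.eval_mul, Polynomial.eval_C, Polynomial.eval_map,
    Polynomial.eval₂_at_apply, Polynomial.eval_mul, Polynomial.eval_mul,
    Polynomial.eval_C, Polynomial.eval_C]
  rw [show ((x : ℝ)) = (((x : ℕ) : ℝ)) by norm_num,
    descPochhammer_eval_eq_descFactorial ℝ x (Multiset.card p.parts)]
  rw [show ((y : ℝ)) = (((y : ℕ) : ℝ)) by norm_num,
    descPochhammer_eval_eq_descFactorial ℝ y (Multiset.card q.parts)]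
  have hp : (multFact p : ℝ) ≠ 0 := Nat.cast_ne_zero.2 (multFact_pos p).ne'
  have hq : (multFact q : ℝ) ≠ 0 := Nat.cast_ne_zero.2 (multFact_pos q).ne'
  field_simp

lemma PL_eq_PR (m : ℕ) : PL m = PR m := by
  have hx : ∀ x : ℕ, Polynomial.eval (Polynomial.C (x : ℝ)) (PL m - PR m) = 0 := by
    intro x
    apply Polynomial.eq_zero_of_infinite_isRoot
    apply Set.Infinite.mono (s := Set.range (fun n : ℕ => (n : ℝ)))
    · rintro _ ⟨y, rfl⟩
      show Polynomial.IsRoot _ _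
      rw [Polynomial.IsRoot.def, Polynomial.eval_sub, Polynomial.eval_sub, evalPL, evalPR,
        ← count_identity]
      exact sub_self _
    · exact Set.infinite_range_of_injective Nat.cast_injective
  have h0 : PL m - PR m = 0 := by
    apply Polynomial.eq_zero_of_infinite_isRoot
    apply Set.Infinite.mono (s := Set.range (fun n : ℕ => (Polynomial.C (n : ℝ) : Polynomial ℝ)))
    · rintro _ ⟨x, rfl⟩
      exact hx x
    · exact Set.infinite_range_of_injective
        (Polynomial.C_injective.comp Nat.cast_injective)
  exact sub_eq_zero.mp h0

end poly

section extract

lemma coeffPL (m i j : ℕ) (him : i ≤ m) :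
    ((PL m).coeff i).coeff j =
      if i = j then ((stirlingFirst m i : ℤ) : ℝ) / m.factorial else 0 := by
  rw [PL, Polynomial.finset_sum_coeff]
  simp only [Polynomial.coeff_C_mul, Polynomial.coeff_X_pow, mul_ite, mul_one, mul_zero]
  rw [Finset.sum_ite_eq (Finset.range (m+1)) i
    (fun r => Polynomial.C (((stirlingFirst m r : ℤ) : ℝ) / m.factorial) * Polynomial.X ^ r)]
  rw [if_pos (Finset.mem_range.2 (Nat.lt_succ_of_le him))]
  rw [Polynomial.coeff_C_mul, Polynomial.coeff_X_pow]
  rw [mul_ite, mul_one, mul_zero]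
  simp [eq_comm]

lemma coeffPR (m i j : ℕ) :
    ((PR m).coeff i).coeff j = ∑ p : Nat.Partition m, ∑ q : Nat.Partition m,
      (stirlingFirst (Multiset.card p.parts) i : ℝ) *
        (stirlingFirst (Multiset.card q.parts) j : ℝ) *
        ((Nmat p q : ℝ) / (multFact p * multFact q)) := by
  rw [PR]
  simp only [Polynomial.finset_sum_coeff]
  apply Finset.sum_congr rfl; intro p _
  apply Finset.sum_congr rfl; intro q _
  rw [Polynomial.coeff_C_mul, Polynomial.coeff_map, Polynomial.coeff_mul_C,
    Polynomial.coeff_C_mul, coeff_desc, coeff_desc]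
  ring

end extract

section final

lemma card_parts_le {m : ℕ} (p : Nat.Partition m) : Multiset.card p.parts ≤ m := by
  have h := Multiset.card_nsmul_le_sum (s := p.parts) (a := 1) (fun x hx => p.parts_pos hx)
  rwa [smul_eq_mul, mul_one, p.parts_sum] at h

lemma stirling_zero {k i : ℕ} (h : k < i) : stirlingFirst k i = 0 := by
  apply Polynomial.coeff_eq_zero_of_natDegree_lt
  rwa [descPochhammer_natDegree ℤ k]

lemma collapse (m i j : ℕ) (V : ℝ) (cp cq : ℕ) (hcp : cp ≤ m) (hcq : cq ≤ m) :
    (∑ k ∈ Finset.Icc i m, ∑ l ∈ Finset.Icc j m,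
      (if cp = k ∧ cq = l then (stirlingFirst k i : ℝ) * (stirlingFirst l j : ℝ) * V else 0))
    = (stirlingFirst cp i : ℝ) * (stirlingFirst cq j : ℝ) * V := by
  classical
  have step1 : ∀ k ∈ Finset.Icc i m, ∀ l ∈ Finset.Icc j m,
      (if cp = k ∧ cq = l then (stirlingFirst k i : ℝ) * (stirlingFirst l j : ℝ) * V else 0)
      = if cp = k ∧ cq = l then
          (stirlingFirst cp i : ℝ) * (stirlingFirst cq j : ℝ) * V else 0 := by
    intro k _ l _
    by_cases h : cp = k ∧ cq = l
    · rw [if_pos h, if_pos h, h.1, h.2]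
    · rw [if_neg h, if_neg h]
  rw [Finset.sum_congr rfl (fun k hk => Finset.sum_congr rfl (fun l hl => step1 k hk l hl))]
  have hinner : ∀ k, (∑ l ∈ Finset.Icc j m, (if cp = k ∧ cq = l then
      (stirlingFirst cp i : ℝ) * (stirlingFirst cq j : ℝ) * V else 0))
      = if cp = k then (if cq ∈ Finset.Icc j m then
          (stirlingFirst cp i : ℝ) * (stirlingFirst cq j : ℝ) * V else 0) else 0 := by
    intro k
    by_cases hk : cp = k
    · simp only [hk, true_and, eq_self_iff_true]
      rw [Finset.sum_ite_eq]
      exact (if_pos trivial).symm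
    · simp [hk]
  rw [Finset.sum_congr rfl (fun k _ => hinner k), Finset.sum_ite_eq]
  by_cases hp : cp ∈ Finset.Icc i m
  · rw [if_pos hp]
    by_cases hq : cq ∈ Finset.Icc j m
    · rw [if_pos hq]
    · rw [if_neg hq]
      have hlt : cq < j := by
        simp only [Finset.mem_Icc, not_and, not_le] at hq
        omega
      rw [stirling_zero hlt]
      simp
  · rw [if_neg hp]
    have hlt : cp < i := by
      simp only [Finset.mem_Icc, not_and, not_le] at hp
      omega
    rw [stirling_zero hlt]
    simp

theorem stmt6 (m i j : ℕ) (hm : 0 < m) (hi1 : 1 ≤ i) (him : i ≤ m)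
    (hj1 : 1 ≤ j) (hjm : j ≤ m) :
    ∑ k ∈ Finset.Icc i m, ∑ l ∈ Finset.Icc j m,
      (stirlingFirst k i : ℝ) * (stirlingFirst l j : ℝ) *
        ∑ p : Nat.Partition m, ∑ q : Nat.Partition m,
          (if Multiset.card p.parts = k ∧ Multiset.card q.parts = l then
            (Nmat p q : ℝ) / (multFact p * multFact q) else 0)
    = if i = j then (stirlingFirst m i : ℝ) / Nat.factorial m else 0 := by
  classical
  have hext := congrArg (fun P : Polynomial (Polynomial ℝ) => (P.coeff i).coeff j) (PL_eq_PR m)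
  rw [coeffPL m i j him, coeffPR m i j] at hext
  have swap1 : ∀ (K : Finset ℕ) (f : ℕ → Nat.Partition m → Nat.Partition m → ℝ),
      (∑ k ∈ K, ∑ p : Nat.Partition m, ∑ q : Nat.Partition m, f k p q)
      = ∑ p : Nat.Partition m, ∑ q : Nat.Partition m, ∑ k ∈ K, f k p q := by
    intro K f
    rw [Finset.sum_comm]
    exact Finset.sum_congr rfl (fun p _ => Finset.sum_comm)
  calc
    ∑ k ∈ Finset.Icc i m, ∑ l ∈ Finset.Icc j m,
      (stirlingFirst k i : ℝ) * (stirlingFirst l j : ℝ) *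
        ∑ p : Nat.Partition m, ∑ q : Nat.Partition m,
          (if Multiset.card p.parts = k ∧ Multiset.card q.parts = l then
            (Nmat p q : ℝ) / (multFact p * multFact q) else 0)
        = ∑ k ∈ Finset.Icc i m, ∑ l ∈ Finset.Icc j m, ∑ p : Nat.Partition m,
            ∑ q : Nat.Partition m,
            (if Multiset.card p.parts = k ∧ Multiset.card q.parts = l then
              (stirlingFirst k i : ℝ) * (stirlingFirst l j : ℝ) *
                ((Nmat p q : ℝ) / (multFact p * multFact q)) else 0) := by
          apply Finset.sum_congr rfl; intro k _
          apply Finset.sum_congr rfl; intro l _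
          rw [Finset.mul_sum]
          apply Finset.sum_congr rfl; intro p _
          rw [Finset.mul_sum]
          apply Finset.sum_congr rfl; intro q _
          rw [mul_ite, mul_zero]
    _ = ∑ p : Nat.Partition m, ∑ q : Nat.Partition m, ∑ k ∈ Finset.Icc i m,
          ∑ l ∈ Finset.Icc j m,
          (if Multiset.card p.parts = k ∧ Multiset.card q.parts = l then
            (stirlingFirst k i : ℝ) * (stirlingFirst l j : ℝ) *
              ((Nmat p q : ℝ) / (multFact p * multFact q)) else 0) := by
          rw [Finset.sum_congr rfl (fun k (_ : k ∈ Finset.Icc i m) =>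
            swap1 (Finset.Icc j m) (fun l p q =>
              if Multiset.card p.parts = k ∧ Multiset.card q.parts = l then
                (stirlingFirst k i : ℝ) * (stirlingFirst l j : ℝ) *
                  ((Nmat p q : ℝ) / (multFact p * multFact q)) else 0)),
            swap1 (Finset.Icc i m) (fun k p q => ∑ l ∈ Finset.Icc j m,
              if Multiset.card p.parts = k ∧ Multiset.card q.parts = l then
                (stirlingFirst k i : ℝ) * (stirlingFirst l j : ℝ) *
                  ((Nmat p q : ℝ) / (multFact p * multFact q)) else 0)]
    _ = ∑ p : Nat.Partition m, ∑ q : Nat.Partition m,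
          (stirlingFirst (Multiset.card p.parts) i : ℝ) *
            (stirlingFirst (Multiset.card q.parts) j : ℝ) *
            ((Nmat p q : ℝ) / (multFact p * multFact q)) := by
          apply Finset.sum_congr rfl; intro p _
          apply Finset.sum_congr rfl; intro q _
          exact collapse m i j _ _ _ (card_parts_le p) (card_parts_le q)
    _ = if i = j then (stirlingFirst m i : ℝ) / Nat.factorial m else 0 := hext.symm

end final
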